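/- arXiv:1704.01388 — 2 statements merged into one kernel-verified Lean document; each statement's English description precedes it below -/
import Mathlib

section
/- For vectors v_1, ..., v_{r+m} in F_2^n and any j with 1 ≤ j ≤ m, define V'_j = Span{v_1, ..., v_{r+j-1}, v_{r+j+1}, ..., v_{r+m}} and d_j = d_H(v_{r+j}, V'_j), and define d_{r,m} = min over r ≤ r' < r+m of d_H(v_{r'+1}, Span{v_1,...,v_{r'}}). Then d_{r,m} ≤ d_j. -/
/-- Hamming distance from a vector to a set of vectors:
`min_{w ∈ S} |u + w|`, i.e. the minimum Hamming distance to a member of `S`. -/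
noncomputable def distToSet {n : ℕ} (u : Fin n → ZMod 2) (S : Set (Fin n → ZMod 2)) : ℕ :=
  sInf {d | ∃ w ∈ S, d = hammingDist u w}

lemma zmod2_aux : ∀ a b c : ZMod 2, (c ≠ b + a - c ↔ a ≠ b) := by decide

lemma zmod2_ne_zero : ∀ a : ZMod 2, a ≠ 0 → a = 1 := by decide

theorem stmt0 (n r m : ℕ) (v : Fin (r + m) → (Fin n → ZMod 2))
    (hv : LinearIndependent (ZMod 2) v)
    (j : ℕ) (hj1 : 1 ≤ j) (hjm : j ≤ m) :
    -- d_{r,m} = min_{r ≤ r' < r+m} d_H(v_{r'+1}, Span{v_1,...,v_{r'}})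
    sInf {d | ∃ r' : Fin (r + m), r ≤ (r' : ℕ) ∧
        d = distToSet (v r')
          (Submodule.span (ZMod 2) {w | ∃ i : Fin (r + m), (i : ℕ) < (r' : ℕ) ∧ w = v i})}
      ≤
    -- d_j = d_H(v_{r+j}, Span of all the other vectors)
    distToSet (v ⟨r + j - 1, by omega⟩)
      (Submodule.span (ZMod 2)
        {w | ∃ i : Fin (r + m), (i : ℕ) ≠ r + j - 1 ∧ w = v i}) := by
  classical
  set j0 : Fin (r + m) := ⟨r + j - 1, by omega⟩ with hj0
  set u := v j0 with hu
  set T : Set (Fin n → ZMod 2) :=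
    ↑(Submodule.span (ZMod 2) {w | ∃ i : Fin (r + m), (i : ℕ) ≠ r + j - 1 ∧ w = v i}) with hT
  -- the dist to T is attained
  have hne : {d | ∃ w ∈ T, d = hammingDist u w}.Nonempty := by
    exact ⟨hammingDist u 0, 0, Submodule.zero_mem _, rfl⟩
  obtain ⟨w, hwT, hwdist⟩ := Nat.sInf_mem hne
  -- express w as a linear combination
  have hset : {w | ∃ i : Fin (r + m), (i : ℕ) ≠ r + j - 1 ∧ w = v i}
      = v '' {i : Fin (r + m) | (i : ℕ) ≠ r + j - 1} := by
    ext x; constructor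
    · rintro ⟨i, hi, rfl⟩; exact ⟨i, hi, rfl⟩
    · rintro ⟨i, hi, rfl⟩; exact ⟨i, hi, rfl⟩
  rw [hT, hset, SetLike.mem_coe, Finsupp.mem_span_image_iff_linearCombination] at hwT
  obtain ⟨l, hlsupp, hlw⟩ := hwT
  have hsupp : ∀ i ∈ l.support, (i : ℕ) ≠ r + j - 1 := fun i hi => hlsupp hi
  -- the pivot index k
  set k : Fin (r + m) := (insert j0 l.support).max' ⟨j0, Finset.mem_insert_self _ _⟩ with hk
  have hj0k : j0 ≤ k := Finset.le_max' _ _ (Finset.mem_insert_self _ _)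
  have hsk : ∀ i ∈ l.support, i ≤ k := fun i hi =>
    Finset.le_max' _ _ (Finset.mem_insert_of_mem hi)
  have hrk : r ≤ (k : ℕ) := le_trans (by simp [hj0]; omega) hj0k
  set M := (Submodule.span (ZMod 2)
      {w | ∃ i : Fin (r + m), (i : ℕ) < (k : ℕ) ∧ w = v i}) with hM
  have hmem : ∀ i : Fin (r + m), i < k → v i ∈ M :=
    fun i hi => Submodule.subset_span ⟨i, hi, rfl⟩
  -- the modified vector
  set w' : Fin n → ZMod 2 := w + u - v k with hw'
  have hw'M : w' ∈ M := by
    have hwrep : w = ∑ i ∈ l.support, l i • v i := by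
      rw [← hlw, Finsupp.linearCombination_apply, Finsupp.sum]
    by_cases hkj : k = j0
    · -- all support indices are < k, and w' = w
      have : w' = w := by
        rw [hw', hkj, ← hu]; ring
      rw [this, hwrep]
      refine Submodule.sum_mem _ fun i hi => Submodule.smul_mem _ _ (hmem i ?_)
      rcases lt_or_eq_of_le (hsk i hi) with h | h
      · exact h
      · exact absurd (by rw [h, hkj, hj0]) (hsupp i hi)
    · -- k ∈ support, l k = 1
      have hkmem : k ∈ l.support := by
        have := Finset.max'_mem (insert j0 l.support) ⟨j0, Finset.mem_insert_self _ _⟩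
        rw [← hk] at this
        rcases Finset.mem_insert.mp this with h | h
        · exact absurd h hkj
        · exact h
      have hlk : l k = 1 := zmod2_ne_zero _ (Finsupp.mem_support_iff.mp hkmem)
      have hj0lt : j0 < k := lt_of_le_of_ne hj0k (fun h => hkj h.symm)
      have hwsplit : w = v k + ∑ i ∈ l.support.erase k, l i • v i := by
        rw [hwrep, ← Finset.add_sum_erase _ _ hkmem, hlk, one_smul]
      have : w' = (∑ i ∈ l.support.erase k, l i • v i) + u := by
        rw [hw', hwsplit]; ring
      rw [this]
      refine Submodule.add_mem _ (Submodule.sum_mem _ fun i hi => Submodule.smul_mem _ _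
        (hmem i ?_)) (hmem j0 hj0lt)
      exact lt_of_le_of_ne (hsk i (Finset.mem_of_mem_erase hi)) (Finset.ne_of_mem_erase hi)
  -- hamming distance preserved
  have hdist : hammingDist (v k) w' = hammingDist u w := by
    unfold hammingDist
    congr 1
    ext i
    simp only [Finset.mem_filter, Finset.mem_univ, true_and, hw']
    have : w' i = w i + u i - v k i := rfl
    rw [show (w + u - v k) i = w i + u i - v k i from rfl]
    exact zmod2_aux (u i) (w i) (v k i)
  -- conclude
  have h1 : distToSet (v k) M ≤ hammingDist u w :=
    hdist ▸ Nat.sInf_le ⟨w', hw'M, rfl⟩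
  calc sInf {d | ∃ r' : Fin (r + m), r ≤ (r' : ℕ) ∧
        d = distToSet (v r')
          (Submodule.span (ZMod 2) {w | ∃ i : Fin (r + m), (i : ℕ) < (r' : ℕ) ∧ w = v i})}
      ≤ distToSet (v k) M := Nat.sInf_le ⟨k, hrk, rfl⟩
    _ ≤ hammingDist u w := h1
    _ = _ := hwdist.symm
end

section
/- Let c_1, ..., c_{n+n_x} ∈ {0,1}, let I be a uniformly random subset of {1,...,n+n_x} of size n, and let T = {1,...,n+n_x} \ I. Let e_I = (1/n) Σ_{i∈I} c_i and e_T = (1/n_x) Σ_{i∈T} c_i. Then for any p ≥ 0 and ε > 0, P[(e_I > p + ε) ∧ (e_T ≤ p)] ≤ exp(−2 (n_x/(n+n_x))² n ε²). -/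
open scoped BigOperators

lemma hoeff_bern (p : ℝ) (hp0 : 0 ≤ p) (hp1 : p ≤ 1) (x : ℝ) (hx : 0 ≤ x) :
    1 - p + p * Real.exp x ≤ Real.exp (p * x + x ^ 2 / 8) := by
  have hd : ∀ y : ℝ, 0 < 1 - p + p * Real.exp y := by
    intro y
    nlinarith [Real.exp_pos y, mul_nonneg hp0 (Real.exp_pos y).le]
  set g : ℝ → ℝ := fun y => p * y + y ^ 2 / 8 - Real.log (1 - p + p * Real.exp y) with hg
  set g' : ℝ → ℝ := fun y => p + y / 4 - p * Real.exp y / (1 - p + p * Real.exp y) with hg'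
  have hder : ∀ y, HasDerivAt g (g' y) y := by
    intro y
    have h1 : HasDerivAt (fun y : ℝ => 1 - p + p * Real.exp y) (p * Real.exp y) y := by
      simpa using ((Real.hasDerivAt_exp y).const_mul p).const_add (1 - p)
    have h2 : HasDerivAt (fun y => Real.log (1 - p + p * Real.exp y))
        (p * Real.exp y / (1 - p + p * Real.exp y)) y := h1.log (hd y).ne'
    have h3 : HasDerivAt (fun y : ℝ => p * y + y ^ 2 / 8) (p * 1 + (2 : ℕ) * y ^ (2 - 1) / 8) y :=
      ((hasDerivAt_id y).const_mul p).add ((hasDerivAt_pow 2 y).div_const 8)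
    simpa [hg, hg'] using (h3.fun_sub h2).congr_deriv (by push_cast; ring)
  have hder2 : ∀ y, HasDerivAt g'
      (1 / 4 - (p * Real.exp y * (1 - p)) / (1 - p + p * Real.exp y) ^ 2) y := by
    intro y
    have h1 : HasDerivAt (fun y : ℝ => 1 - p + p * Real.exp y) (p * Real.exp y) y := by
      simpa using ((Real.hasDerivAt_exp y).const_mul p).const_add (1 - p)
    have h2 : HasDerivAt (fun y : ℝ => p * Real.exp y) (p * Real.exp y) y :=
      (Real.hasDerivAt_exp y).const_mul p
    have h4 : HasDerivAt (fun y : ℝ => p + y / 4) (1 / 4) y := by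
      simpa using ((hasDerivAt_id y).div_const 4).const_add p
    refine (h4.sub (h2.div h1 (hd y).ne')).congr_deriv ?_
    field_simp
    ring
  have hd2nonneg : ∀ y : ℝ,
      0 ≤ 1 / 4 - (p * Real.exp y * (1 - p)) / (1 - p + p * Real.exp y) ^ 2 := by
    intro y
    rw [sub_nonneg, div_le_iff₀ (pow_pos (hd y) 2)]
    nlinarith [sq_nonneg ((1 - p) - p * Real.exp y), hd y]
  have hmono' : Monotone g' :=
    monotone_of_deriv_nonneg (fun y => (hder2 y).differentiableAt)
      (fun y => by rw [(hder2 y).deriv]; exact hd2nonneg y)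
  have hg'0 : g' 0 = 0 := by
    have h1 : (1 : ℝ) - p + p * Real.exp 0 = 1 := by simp [Real.exp_zero]
    simp only [hg', h1, Real.exp_zero, mul_one, div_one]
    ring
  have hg'nonneg : ∀ y : ℝ, 0 ≤ y → 0 ≤ g' y := fun y hy => hg'0 ▸ hmono' hy
  have hmono : MonotoneOn g (Set.Ici (0 : ℝ)) := by
    refine monotoneOn_of_deriv_nonneg (convex_Ici 0)
      (Continuous.continuousOn ?_) (fun y _ => (hder y).differentiableAt.differentiableWithinAt)
      (fun y hy => ?_)
    · exact continuous_iff_continuousAt.mpr fun y => (hder y).continuousAt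
    · rw [(hder y).deriv]
      exact hg'nonneg y (le_of_lt (by simpa [interior_Ici] using hy))
  have hg0 : g 0 = 0 := by simp [hg, Real.exp_zero]
  have : 0 ≤ g x := hg0 ▸ hmono Set.self_mem_Ici hx hx
  have hlog : Real.log (1 - p + p * Real.exp x) ≤ p * x + x ^ 2 / 8 := by
    simpa [hg, sub_nonneg] using this
  exact (Real.log_le_iff_le_exp (hd x)).mp hlog


lemma pow_choose_le (M N : ℕ) (hMN : M ≤ N) :
    ∀ j : ℕ, N ^ j * M.choose j ≤ M ^ j * N.choose j := by
  intro j
  induction j with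
  | zero => simp
  | succ j ih =>
    have key : N * (M - j) ≤ M * (N - j) := by
      rcases le_or_gt M j with h | h
      · simp [Nat.sub_eq_zero_of_le h]
      · have hjN : j ≤ N := le_of_lt (lt_of_lt_of_le h hMN)
        rw [Nat.mul_sub, Nat.mul_sub, Nat.mul_comm N M]
        exact Nat.sub_le_sub_left (Nat.mul_le_mul_right j hMN) _
    have e1 : N ^ (j+1) * M.choose (j+1) * (j+1) = N ^ j * M.choose j * (N * (M - j)) := by
      calc N ^ (j+1) * M.choose (j+1) * (j+1) = N ^ j * N * (M.choose (j+1) * (j+1)) := by ring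
        _ = N ^ j * N * (M.choose j * (M - j)) := by rw [Nat.choose_succ_right_eq]
        _ = N ^ j * M.choose j * (N * (M - j)) := by ring
    have e2 : M ^ (j+1) * N.choose (j+1) * (j+1) = M ^ j * N.choose j * (M * (N - j)) := by
      calc M ^ (j+1) * N.choose (j+1) * (j+1) = M ^ j * M * (N.choose (j+1) * (j+1)) := by ring
        _ = M ^ j * M * (N.choose j * (N - j)) := by rw [Nat.choose_succ_right_eq]
        _ = M ^ j * N.choose j * (M * (N - j)) := by ring
    have h : N ^ (j+1) * M.choose (j+1) * (j+1) ≤ M ^ (j+1) * N.choose (j+1) * (j+1) := by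
      rw [e1, e2]; exact Nat.mul_le_mul ih key
    exact Nat.le_of_mul_le_mul_right h (Nat.succ_pos j)

lemma chvatal_term (M N n j : ℕ) (hjn : j ≤ n) (hnN : n ≤ N) (hMN : M ≤ N) :
    N ^ j * (M.choose j * (N - j).choose (n - j)) ≤ M ^ j * (N.choose n * n.choose j) := by
  rw [Nat.choose_mul (n := N) hjn]
  calc N ^ j * (M.choose j * (N - j).choose (n - j))
      = (N ^ j * M.choose j) * (N - j).choose (n - j) := by ring
    _ ≤ (M ^ j * N.choose j) * (N - j).choose (n - j) :=
        Nat.mul_le_mul_right _ (pow_choose_le M N hMN j)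
    _ = M ^ j * (N.choose j * (N - j).choose (n - j)) := by ring


open Finset

lemma card_supersets {α : Type*} [Fintype α] [DecidableEq α] (S : Finset α) (n : ℕ)
    (hS : S.card ≤ n) :
    (((univ : Finset α).powersetCard n).filter (fun I => S ⊆ I)).card
      = (Fintype.card α - S.card).choose (n - S.card) := by
  have : (((univ : Finset α).powersetCard n).filter (fun I => S ⊆ I)).card
      = ((Sᶜ).powersetCard (n - S.card)).card := by
    apply Finset.card_bij' (fun I _ => I \ S) (fun J _ => J ∪ S)
    · intro I hI
      simp only [mem_filter, mem_powersetCard] at hI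
      obtain ⟨⟨-, hcard⟩, hSI⟩ := hI
      simp only [mem_powersetCard]
      constructor
      · intro x hx
        simp only [mem_sdiff] at hx
        simp [mem_compl, hx.2]
      · rw [card_sdiff_of_subset hSI, hcard]
    · intro J hJ
      simp only [mem_powersetCard] at hJ
      obtain ⟨hJc, hJcard⟩ := hJ
      have hdisj : Disjoint J S := by
        refine disjoint_left.mpr fun x hx hxS => ?_
        have := hJc hx
        simp [mem_compl] at this
        exact this hxS
      simp only [mem_filter, mem_powersetCard]
      refine ⟨⟨subset_univ _, ?_⟩, subset_union_right⟩
      rw [card_union_of_disjoint hdisj, hJcard]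
      omega
    · intro I hI
      simp only [mem_filter, mem_powersetCard] at hI
      exact sdiff_union_of_subset hI.2
    · intro J hJ
      simp only [mem_powersetCard] at hJ
      have hdisj : Disjoint J S := by
        refine disjoint_left.mpr fun x hx hxS => ?_
        have := hJ.1 hx
        simp [mem_compl] at this
        exact this hxS
      exact union_sdiff_cancel_right hdisj
  rw [this, card_powersetCard, card_compl]

lemma card_supersets_zero {α : Type*} [Fintype α] [DecidableEq α] (S : Finset α) (n : ℕ)
    (hS : n < S.card) :
    (((univ : Finset α).powersetCard n).filter (fun I => S ⊆ I)).card = 0 := by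
  rw [Finset.card_eq_zero]
  rw [Finset.filter_eq_empty_iff]
  intro I hI hSI
  simp only [mem_powersetCard] at hI
  have := Finset.card_le_card hSI
  omega


open Finset

section
variable {α : Type*} [Fintype α] [DecidableEq α]

lemma chvatal (n : ℕ) (hn : n ≤ Fintype.card α) (hN : 0 < Fintype.card α)
    (c : α → ℝ) (hc : ∀ i, c i = 0 ∨ c i = 1) (z : ℝ) (hz : 1 ≤ z) :
    ∑ I ∈ (univ : Finset α).powersetCard n, ∏ i ∈ I, (1 + (z - 1) * c i)
      ≤ ((Fintype.card α).choose n : ℝ)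
        * (1 + (z - 1) * ((∑ i, c i) / Fintype.card α)) ^ n := by
  classical
  set N := Fintype.card α with hNdef
  set ones := univ.filter (fun i => c i = 1) with hones
  set M := ones.card with hM
  -- sum of c equals M
  have hsum : (∑ i, c i) = M := by
    rw [← Finset.sum_filter_add_sum_filter_not univ (fun i => c i = 1) c]
    have h1 : ∑ i ∈ ones, c i = M := by
      rw [Finset.sum_congr rfl (fun i hi => (mem_filter.mp hi).2), Finset.sum_const, hM]
      simp [hones]
    have h2 : ∑ i ∈ univ.filter (fun i => ¬ c i = 1), c i = 0 := by
      apply Finset.sum_eq_zero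
      intro i hi
      rcases hc i with h | h
      · exact h
      · exact absurd h (mem_filter.mp hi).2
    rw [h1, h2, add_zero]
  have hMN : M ≤ N := by
    rw [hM, hNdef, ← Finset.card_univ]
    exact Finset.card_le_card (filter_subset _ _)
  -- expansion of the product
  have hexp : ∀ I : Finset α, ∏ i ∈ I, (1 + (z - 1) * c i)
      = ∑ S ∈ I.powerset, (z - 1) ^ S.card * ∏ i ∈ S, c i := by
    intro I
    have : ∀ i ∈ I, 1 + (z - 1) * c i = (z - 1) * c i + 1 := fun i _ => by ring
    rw [Finset.prod_congr rfl this, Finset.prod_add]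
    apply Finset.sum_congr rfl
    intro S hS
    rw [Finset.prod_const_one, mul_one, Finset.prod_mul_distrib, Finset.prod_const]
  -- swap sums
  have hswap : ∑ I ∈ (univ : Finset α).powersetCard n, ∏ i ∈ I, (1 + (z - 1) * c i)
      = ∑ S ∈ (univ : Finset α).powerset, ((z - 1) ^ S.card * ∏ i ∈ S, c i)
          * ((((univ : Finset α).powersetCard n).filter (fun I => S ⊆ I)).card : ℝ) := by
    simp only [hexp]
    have inner : ∀ I : Finset α, ∑ S ∈ I.powerset, (z - 1) ^ S.card * ∏ i ∈ S, c i
        = ∑ S ∈ (univ : Finset α).powerset,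
            if S ⊆ I then (z - 1) ^ S.card * ∏ i ∈ S, c i else 0 := by
      intro I
      rw [← Finset.sum_filter]
      congr 1
      ext S
      simp [Finset.mem_powerset]
    simp only [inner]
    rw [Finset.sum_comm]
    apply Finset.sum_congr rfl
    intro S _
    rw [← Finset.sum_filter, Finset.sum_const, nsmul_eq_mul, mul_comm]
  rw [hswap]
  have hprodc : ∀ S : Finset α, (∏ i ∈ S, c i) = if S ⊆ ones then 1 else 0 := by
    intro S
    by_cases h : S ⊆ ones
    · rw [if_pos h]
      apply Finset.prod_eq_one
      intro i hi
      exact (mem_filter.mp (h hi)).2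
    · rw [if_neg h]
      obtain ⟨i, hiS, hio⟩ := not_subset.mp h
      refine Finset.prod_eq_zero hiS ?_
      rcases hc i with h0 | h1
      · exact h0
      · exact absurd (mem_filter.mpr ⟨mem_univ i, h1⟩) hio
  -- group by cardinality
  rw [Finset.sum_powerset]
  have hcardu : (univ : Finset α).card = N := Finset.card_univ
  -- terms with j > n vanish
  have hrange : Finset.range (n + 1) ⊆ Finset.range ((univ : Finset α).card + 1) := by
    apply Finset.range_subset_range.mpr
    omega
  rw [← Finset.sum_subset hrange (by
    intro j hj hjn
    simp only [Finset.mem_range] at hj hjn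
    apply Finset.sum_eq_zero
    intro S hS
    rw [Finset.mem_powersetCard] at hS
    rw [card_supersets_zero S n (by omega)]
    simp)]
  -- evaluate each j-term
  have hterm : ∀ j ∈ Finset.range (n + 1),
      ∑ S ∈ (univ : Finset α).powersetCard j, ((z - 1) ^ S.card * ∏ i ∈ S, c i)
          * ((((univ : Finset α).powersetCard n).filter (fun I => S ⊆ I)).card : ℝ)
      = (z - 1) ^ j * (M.choose j : ℝ) * ((N - j).choose (n - j) : ℝ) := by
    intro j hj
    rw [Finset.mem_range] at hj
    have : ∀ S ∈ (univ : Finset α).powersetCard j,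
        ((z - 1) ^ S.card * ∏ i ∈ S, c i)
          * ((((univ : Finset α).powersetCard n).filter (fun I => S ⊆ I)).card : ℝ)
        = if S ⊆ ones then (z - 1) ^ j * ((N - j).choose (n - j) : ℝ) else 0 := by
      intro S hS
      rw [Finset.mem_powersetCard] at hS
      rw [hprodc S, card_supersets S n (by omega), hS.2]
      by_cases h : S ⊆ ones <;> simp [h, hNdef] <;> ring
    rw [Finset.sum_congr rfl this, ← Finset.sum_filter]
    have hfilt : ((univ : Finset α).powersetCard j).filter (fun S => S ⊆ ones)
        = ones.powersetCard j := by
      ext S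
      simp only [Finset.mem_filter, Finset.mem_powersetCard]
      constructor
      · rintro ⟨⟨-, hc'⟩, hso⟩; exact ⟨hso, hc'⟩
      · rintro ⟨hso, hc'⟩; exact ⟨⟨Finset.subset_univ _, hc'⟩, hso⟩
    rw [hfilt, Finset.sum_const, Finset.card_powersetCard, nsmul_eq_mul, ← hM]
    ring
  rw [Finset.sum_congr rfl hterm]
  -- binomial expansion of the RHS
  have hNpos : (0:ℝ) < N := by exact_mod_cast hN
  rw [hsum]
  have hrhs : (1 + (z - 1) * ((M : ℝ) / N)) ^ n
      = ∑ j ∈ Finset.range (n + 1), ((z - 1) * ((M:ℝ) / N)) ^ j * (n.choose j : ℝ) := by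
    have := add_pow ((z - 1) * ((M:ℝ) / N)) 1 n
    simp only [one_pow, mul_one] at this
    rw [add_comm (1 : ℝ), this]
  rw [hrhs, Finset.mul_sum]
  apply Finset.sum_le_sum
  intro j hj
  rw [Finset.mem_range] at hj
  have hz' : (0:ℝ) ≤ (z - 1) ^ j := pow_nonneg (by linarith) j
  have key : (M.choose j : ℝ) * ((N - j).choose (n - j) : ℝ)
      ≤ ((N.choose n : ℝ) * (n.choose j : ℝ)) * ((M:ℝ) / N) ^ j := by
    rw [div_pow, mul_div_assoc', le_div_iff₀ (pow_pos hNpos j)]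
    have := chvatal_term M N n j (by omega) hn hMN
    calc (M.choose j : ℝ) * ((N - j).choose (n - j) : ℝ) * N ^ j
        = (N ^ j * (M.choose j * (N - j).choose (n - j)) : ℕ) := by push_cast; ring
      _ ≤ (M ^ j * (N.choose n * n.choose j) : ℕ) := by exact_mod_cast this
      _ = (N.choose n : ℝ) * (n.choose j : ℝ) * (M:ℝ) ^ j := by push_cast; ring
  calc (z - 1) ^ j * (M.choose j : ℝ) * ((N - j).choose (n - j) : ℝ)
      = (z - 1) ^ j * ((M.choose j : ℝ) * ((N - j).choose (n - j) : ℝ)) := by ring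
    _ ≤ (z - 1) ^ j * (((N.choose n : ℝ) * (n.choose j : ℝ)) * ((M:ℝ) / N) ^ j) :=
        mul_le_mul_of_nonneg_left key hz'
    _ = (N.choose n : ℝ) * (((z - 1) * ((M:ℝ) / N)) ^ j * (n.choose j : ℝ)) := by
        rw [mul_pow]; ring
end


section main
open Finset

/-- Sampling without replacement: a uniformly random subset `I` of size `n`
(the INFO bits) with complement `T` of size `n_x` (the TEST bits), from a
`{0,1}`-valued population of size `n + n_x`.  The probability that the sample
error rate exceeds `p + ε` while the test error rate is at most `p` is at most
`exp(−2 (n_x/(n+n_x))² n ε²)`. -/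
theorem stmt9 (n nx : ℕ) (hn : 0 < n) (hnx : 0 < nx)
    (c : Fin (n + nx) → ℝ) (hc : ∀ i, c i = 0 ∨ c i = 1)
    (p ε : ℝ) (hp : 0 ≤ p) (hε : 0 < ε) :
    (((Finset.univ : Finset (Fin (n + nx))).powersetCard n).filter
        (fun I => (∑ i ∈ I, c i) / n > p + ε ∧ (∑ i ∈ Iᶜ, c i) / nx ≤ p)).card /
      (((Finset.univ : Finset (Fin (n + nx))).powersetCard n).card : ℝ)
    ≤ Real.exp (-2 * ((nx : ℝ) / (n + nx)) ^ 2 * n * ε ^ 2) := by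
  classical
  have hNpos : (0:ℝ) < ((n + nx):ℝ) := by positivity
  have hn' : (0:ℝ) < (n:ℝ) := by exact_mod_cast hn
  have hnx' : (0:ℝ) < (nx:ℝ) := by exact_mod_cast hnx
  have hcard : Fintype.card (Fin (n + nx)) = (n + nx) := Fintype.card_fin (n + nx)
  set B := (Finset.univ : Finset (Fin (n + nx))).powersetCard n with hB
  have hBcard : (B.card : ℝ) = ((n + nx).choose n : ℝ) := by
    rw [hB, card_powersetCard, card_univ, hcard]
  have hBpos : (0:ℝ) < (B.card : ℝ) := by
    rw [hBcard]
    exact_mod_cast Nat.choose_pos (by omega)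
  set filt := B.filter
      (fun I => (∑ i ∈ I, c i) / n > p + ε ∧ (∑ i ∈ Iᶜ, c i) / nx ≤ p) with hfilt
  set μ : ℝ := (∑ i, c i) / (n + nx) with hμ
  have hc0 : ∀ i, 0 ≤ c i := fun i => by rcases hc i with h | h <;> rw [h] <;> norm_num
  have hc1 : ∀ i, c i ≤ 1 := fun i => by rcases hc i with h | h <;> rw [h] <;> norm_num
  have hμ0 : 0 ≤ μ := by
    apply div_nonneg _ hNpos.le
    exact Finset.sum_nonneg fun i _ => hc0 i
  have hμ1 : μ ≤ 1 := by
    rw [hμ, div_le_one hNpos]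
    calc (∑ i, c i) ≤ ∑ _i : Fin (n + nx), (1:ℝ) := Finset.sum_le_sum fun i _ => hc1 i
      _ = (n + nx) := by simp [hcard]
  set s : ℝ := (nx:ℝ) / ((n + nx):ℝ) * ε with hs
  have hspos : 0 < s := by positivity
  set lam : ℝ := 4 * s with hlam
  have hlam0 : 0 ≤ lam := by positivity
  set z : ℝ := Real.exp lam with hz
  have hz1 : 1 ≤ z := Real.one_le_exp hlam0
  set θ : ℝ := (n:ℝ) * μ + (n:ℝ) * s with hθ
  -- step A : on the event, the INFO sum exceeds θ
  have stepA : ∀ I ∈ filt, θ ≤ ∑ i ∈ I, c i := by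
    intro I hI
    rw [hfilt, Finset.mem_filter] at hI
    obtain ⟨-, h1, h2⟩ := hI
    have hA : (p + ε) * n < ∑ i ∈ I, c i := (lt_div_iff₀ hn').mp h1
    have hT : ∑ i ∈ Iᶜ, c i ≤ p * nx := (div_le_iff₀ hnx').mp h2
    have hsplit : (∑ i ∈ I, c i) + (∑ i ∈ Iᶜ, c i) = ∑ i, c i :=
      Finset.sum_add_sum_compl I c
    have hkey : (nx:ℝ) * ((p + ε) * n) ≤ (nx:ℝ) * (∑ i ∈ I, c i) :=
      mul_le_mul_of_nonneg_left hA.le hnx'.le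
    have hpos : (0:ℝ) < (n:ℝ) + (nx:ℝ) := by positivity
    rw [hθ, hμ, hs]
    push_cast
    rw [show (n:ℝ) * ((∑ i, c i) / ((n:ℝ) + (nx:ℝ))) + (n:ℝ) * ((nx:ℝ) / ((n:ℝ) + (nx:ℝ)) * ε)
        = ((n:ℝ) * (∑ i, c i) + (n:ℝ) * (nx:ℝ) * ε) / ((n:ℝ) + (nx:ℝ)) from by
          field_simp, div_le_iff₀ hpos]
    nlinarith [hkey, hT, hsplit]
  -- chain of inequalities
  have h1 : (filt.card : ℝ) * Real.exp (lam * θ) ≤ ∑ I ∈ B, Real.exp (lam * ∑ i ∈ I, c i) := by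
    calc (filt.card : ℝ) * Real.exp (lam * θ)
        = ∑ _I ∈ filt, Real.exp (lam * θ) := by rw [Finset.sum_const, nsmul_eq_mul]
      _ ≤ ∑ I ∈ filt, Real.exp (lam * ∑ i ∈ I, c i) := by
          apply Finset.sum_le_sum
          intro I hI
          exact Real.exp_le_exp.mpr (mul_le_mul_of_nonneg_left (stepA I hI) hlam0)
      _ ≤ ∑ I ∈ B, Real.exp (lam * ∑ i ∈ I, c i) := by
          apply Finset.sum_le_sum_of_subset_of_nonneg (Finset.filter_subset _ _)
          intro I _ _
          exact (Real.exp_pos _).le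
  have h2 : ∀ I : Finset (Fin (n + nx)), Real.exp (lam * ∑ i ∈ I, c i)
      = ∏ i ∈ I, (1 + (z - 1) * c i) := by
    intro I
    rw [Finset.mul_sum, Real.exp_sum]
    apply Finset.prod_congr rfl
    intro i _
    rcases hc i with h | h <;> rw [h] <;> simp [hz]
  have h3 : ∑ I ∈ B, Real.exp (lam * ∑ i ∈ I, c i)
      ≤ ((n + nx).choose n : ℝ) * (1 + (z - 1) * μ) ^ n := by
    rw [Finset.sum_congr rfl (fun I _ => h2 I)]
    have h := chvatal (α := Fin (n + nx)) n (by rw [hcard]; omega) (by rw [hcard]; omega) c hc z hz1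
    rw [hcard] at h
    push_cast at h
    rw [hB, hμ]
    exact h
  have h4 : (1 + (z - 1) * μ) ^ n ≤ Real.exp ((n:ℝ) * (μ * lam + lam ^ 2 / 8)) := by
    have hb : 1 + (z - 1) * μ = 1 - μ + μ * Real.exp lam := by rw [hz]; ring
    have hbd := hoeff_bern μ hμ0 hμ1 lam hlam0
    have hbase0 : 0 ≤ 1 + (z - 1) * μ := by nlinarith
    calc (1 + (z - 1) * μ) ^ n ≤ (Real.exp (μ * lam + lam ^ 2 / 8)) ^ n := by
          apply pow_le_pow_left₀ hbase0
          rw [hb]; exact hbd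
      _ = Real.exp ((n:ℝ) * (μ * lam + lam ^ 2 / 8)) := by
          rw [← Real.exp_nat_mul]
  have hsplitexp : Real.exp ((n:ℝ) * (μ * lam + lam ^ 2 / 8))
      = Real.exp (-2 * (n:ℝ) * s ^ 2) * Real.exp (lam * θ) := by
    rw [← Real.exp_add]
    congr 1
    rw [hlam, hθ]
    ring
  have main : (filt.card : ℝ) * Real.exp (lam * θ)
      ≤ (((n + nx).choose n : ℝ) * Real.exp (-2 * (n:ℝ) * s ^ 2)) * Real.exp (lam * θ) := by
    calc (filt.card : ℝ) * Real.exp (lam * θ) ≤ ((n + nx).choose n : ℝ) * (1 + (z - 1) * μ) ^ n :=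
          h1.trans h3
      _ ≤ ((n + nx).choose n : ℝ) * Real.exp ((n:ℝ) * (μ * lam + lam ^ 2 / 8)) := by
          apply mul_le_mul_of_nonneg_left h4 (by positivity)
      _ = (((n + nx).choose n : ℝ) * Real.exp (-2 * (n:ℝ) * s ^ 2)) * Real.exp (lam * θ) := by
          rw [hsplitexp]; ring
  have hfinal : (filt.card : ℝ) ≤ ((n + nx).choose n : ℝ) * Real.exp (-2 * (n:ℝ) * s ^ 2) :=
    le_of_mul_le_mul_right main (Real.exp_pos _)
  rw [div_le_iff₀ hBpos, hBcard]
  have hsexp : Real.exp (-2 * ((nx : ℝ) / ((n + nx):ℝ)) ^ 2 * (n:ℝ) * ε ^ 2)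
      = Real.exp (-2 * (n:ℝ) * s ^ 2) := by
    congr 1
    rw [hs]
    ring
  calc (filt.card : ℝ) ≤ ((n + nx).choose n : ℝ) * Real.exp (-2 * (n:ℝ) * s ^ 2) := hfinal
    _ = Real.exp (-2 * ((nx : ℝ) / ((n + nx):ℝ)) ^ 2 * (n:ℝ) * ε ^ 2) * ((n + nx).choose n : ℝ) := by
        rw [hsexp]; ring
end main
end
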